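/- For quasiexponentials f_i(u) = e^{q_i u}(u + c_i), i = 1,...,n, with q_1,...,q_n pairwise distinct complex numbers and c_i arbitrary complex numbers, the Wronskian satisfies Wr(f_1,...,f_n) = e^{(q_1+···+q_n)u} · ∏_{i<j}(q_j - q_i) · g(u) for some monic polynomial g of degree n. -/

import Mathlib

open Finset

open Polynomial

lemma iter_quasi (qv cv : ℂ) (j : ℕ) (u : ℂ) :
    iteratedDeriv j (fun x => Complex.exp (qv * x) * (x + cv)) u
      = Complex.exp (qv * u) * (qv ^ j * (u + cv) + j * qv ^ (j - 1)) := by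
  induction j generalizing u with
  | zero => simp
  | succ j ih =>
    rw [iteratedDeriv_succ]
    have hfun : iteratedDeriv j (fun x => Complex.exp (qv * x) * (x + cv))
        = fun u => Complex.exp (qv * u) * (qv ^ j * (u + cv) + j * qv ^ (j - 1)) :=
      funext ih
    rw [hfun]
    have h1 : HasDerivAt (fun x : ℂ => Complex.exp (qv * x))
        (Complex.exp (qv * u) * qv) u := by
      simpa using ((hasDerivAt_id u).const_mul qv).cexp
    have h2 : HasDerivAt (fun x : ℂ => qv ^ j * (x + cv) + (j : ℂ) * qv ^ (j - 1))
        (qv ^ j) u := by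
      simpa using (((hasDerivAt_id u).add_const cv).const_mul (qv ^ j)).add_const
        ((j : ℂ) * qv ^ (j - 1))
    rw [HasDerivAt.deriv (f := fun x => Complex.exp (qv * x) * (qv ^ j * (x + cv) + (j : ℂ) * qv ^ (j - 1))) (h1.mul h2)]
    rcases Nat.eq_zero_or_pos j with hj | hj
    · subst hj; simp; ring
    · have h3 : j - 1 + 1 = j := Nat.succ_pred_eq_of_pos hj
      have hpow : qv * qv ^ (j - 1) = qv ^ j := by rw [← pow_succ', h3]
      push_cast
      linear_combination Complex.exp (qv * u) * (j : ℂ) * hpow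

/-- the Wronskian of the quasiexponentials `f i u = e^{q i · u}(u + c i)`,
with pairwise distinct `q i`, equals `e^{(∑ q) u} ∏_{i<j}(q j - q i) · g(u)` for some
monic polynomial `g` of degree `n`. -/
theorem wronskian_quasiexponentials (n : ℕ) (q c : Fin n → ℂ)
    (hq : Function.Injective q) :
    ∃ g : Polynomial ℂ, g.Monic ∧ g.natDegree = n ∧ ∀ u : ℂ,
      Matrix.det (Matrix.of fun i j : Fin n =>
          iteratedDeriv (j : ℕ) (fun x => Complex.exp (q i * x) * (x + c i)) u)
        = Complex.exp ((∑ i, q i) * u)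
          * (∏ i, ∏ j ∈ Finset.univ.filter (fun j => i < j), (q j - q i))
          * g.eval u := by
  set V : ℂ := ∏ i, ∏ j ∈ Finset.univ.filter (fun j => i < j), (q j - q i) with hV
  -- the polynomial matrix
  set M : Matrix (Fin n) (Fin n) ℂ[X] := Matrix.of fun i j : Fin n =>
    C (q i ^ (j : ℕ)) * X + C (q i ^ (j : ℕ) * c i + (j : ℕ) * q i ^ ((j : ℕ) - 1)) with hM
  have hMdeg : ∀ i j, (M i j).natDegree ≤ 1 := by
    intro i j
    refine (Polynomial.natDegree_add_le _ _).trans (max_le ?_ ?_)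
    · exact (Polynomial.natDegree_C_mul_le _ _).trans (by simp)
    · exact le_trans (le_of_eq (Polynomial.natDegree_C _)) (Nat.zero_le 1)
  have hMcoeff1 : ∀ i j, (M i j).coeff 1 = q i ^ (j : ℕ) := by
    intro i j
    simp only [hM, Matrix.of_apply, Polynomial.coeff_add, Polynomial.coeff_C_mul,
      Polynomial.coeff_X_one, Polynomial.coeff_C, mul_one]
    norm_num
  set P : ℂ[X] := M.det with hP
  have hPdeg : P.natDegree ≤ n := by
    rw [hP, Matrix.det_apply']
    apply Polynomial.natDegree_sum_le_of_forall_le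
    intro σ _
    apply (Polynomial.natDegree_mul_le).trans
    simp only [Polynomial.natDegree_intCast, zero_add]
    calc (∏ i, M (σ i) i).natDegree ≤ ∑ i : Fin n, (M (σ i) i).natDegree :=
          Polynomial.natDegree_prod_le _ _
      _ ≤ ∑ _i : Fin n, 1 := Finset.sum_le_sum fun i _ => hMdeg _ _
      _ = n := by simp
  have hVeq : V = (Matrix.vandermonde q).det := by
    rw [Matrix.det_vandermonde, hV]
    congr 1; ext i; congr 1; ext j; simp [Finset.mem_Ioi]
  have hPcoeff : P.coeff n = V := by
    rw [hP, Matrix.det_apply', Polynomial.finset_sum_coeff]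
    rw [hVeq, Matrix.det_apply']
    congr 1; ext σ
    rw [Polynomial.coeff_intCast_mul]
    congr 1
    have := Polynomial.coeff_prod_of_natDegree_le (s := Finset.univ)
      (fun i => M (σ i) i) 1 (fun i _ => hMdeg _ _)
    simp only [Finset.card_univ, Fintype.card_fin, mul_one] at this
    rw [this]
    simp [hMcoeff1, Matrix.vandermonde]
  have hVne : V ≠ 0 := by
    rw [hV]
    apply Finset.prod_ne_zero_iff.mpr
    intro i _
    apply Finset.prod_ne_zero_iff.mpr
    intro j hj
    simp only [Finset.mem_filter] at hj
    exact sub_ne_zero_of_ne fun h => ne_of_gt hj.2 (hq h)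
  have hgcoeff : (C V⁻¹ * P).coeff n = 1 := by
    rw [Polynomial.coeff_C_mul, hPcoeff, inv_mul_cancel₀ hVne]
  have hgdeg : (C V⁻¹ * P).natDegree = n := by
    refine le_antisymm ((Polynomial.natDegree_mul_le).trans ?_)
      (Polynomial.le_natDegree_of_ne_zero (by rw [hgcoeff]; exact one_ne_zero))
    simpa using hPdeg
  refine ⟨C V⁻¹ * P, ?_, hgdeg, ?_⟩
  · rw [Polynomial.Monic, Polynomial.leadingCoeff, hgdeg]
    exact hgcoeff
  · intro u
    have hdet : (Matrix.of fun i j : Fin n =>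
        iteratedDeriv (j : ℕ) (fun x => Complex.exp (q i * x) * (x + c i)) u).det
        = (∏ i, Complex.exp (q i * u)) * (Matrix.of fun i j : Fin n =>
            q i ^ (j : ℕ) * (u + c i) + (j : ℕ) * q i ^ ((j : ℕ) - 1)).det := by
      rw [← Matrix.det_mul_column]
      congr 1
      ext i j
      simp [iter_quasi]
    have heval : Polynomial.eval u P = (Matrix.of fun i j : Fin n =>
        q i ^ (j : ℕ) * (u + c i) + (j : ℕ) * q i ^ ((j : ℕ) - 1)).det := by
      have : Polynomial.eval u P = (Polynomial.evalRingHom u) M.det := rfl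
      rw [this, RingHom.map_det]
      congr 1
      ext i j
      simp [hM]
      ring
    have hexp : (∏ i, Complex.exp (q i * u)) = Complex.exp ((∑ i, q i) * u) := by
      rw [← Complex.exp_sum, Finset.sum_mul]
    rw [hdet, ← heval, hexp, Polynomial.eval_mul, Polynomial.eval_C]
    field_simp
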